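/- Assume the decomposition K = Σ_{i=1}^N K_i satisfies (SD) with constant C_A > 0 and (SCS) with constant C_S > 0. Let u ∈ K be the minimizer of E over K ((Au - f, φ) = 0 for all φ ∈ K), and let u^{k+1} be the result of one SSO sweep from u^k ∈ K (v_0 = u^k; e_i ∈ K_i with (A e_i, φ) = (f - A v_{i-1}, φ) for all φ ∈ K_i; v_i = v_{i-1} + e_i; u^{k+1} = v_N). Then E(u^{k+1}) - E(u) ≤ (1 - 1/(1 + C_A C_S)) [E(u^k) - E(u)]. -/

import Mathlib

open RealInnerProductSpace

set_option maxHeartbeats 1000000 in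
/-- Under (SD) and (SCS), one sweep of SSO contracts the energy difference:
`E(u^{k+1}) - E(u) ≤ (1 - 1/(1 + C_A C_S)) [E(u^k) - E(u)]`. -/
theorem sso_energy_contraction
    {V : Type*} [NormedAddCommGroup V] [InnerProductSpace ℝ V] [CompleteSpace V]
    (A : V →L[ℝ] V) (hAsym : ∀ u v : V, ⟪A u, v⟫ = ⟪u, A v⟫)
    (α : ℝ) (hα : 0 < α) (hAcoer : ∀ v : V, α * ‖v‖ ^ 2 ≤ ⟪A v, v⟫)
    (f : V)
    (E : V → ℝ) (hE : ∀ w : V, E w = 1 / 2 * ⟪A w, w⟫ - ⟪f, w⟫)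
    (K : Submodule ℝ V) (hK : IsClosed ((K : Set V)))
    (N : ℕ) (Ki : Fin N → Submodule ℝ V) (hKi : ∀ i, IsClosed ((Ki i : Set V)))
    (hKiK : ∀ i, Ki i ≤ K)
    (CA : ℝ) (hCA : 0 < CA)
    (hSD : ∀ x ∈ K, ∃ w : Fin N → V, (∀ i, w i ∈ Ki i) ∧ ∑ i, w i = x ∧
      ∑ i, ⟪A (w i), w i⟫ ≤ CA * ⟪A x, x⟫)
    (CS : ℝ) (hCS : 0 < CS)
    (hSCS : ∀ u' v' : Fin N → V, (∀ i, u' i ∈ Ki i) → (∀ j, v' j ∈ Ki j) →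
      ∑ i, ∑ j ∈ Finset.Ioi i, ⟪A (u' i), v' j⟫ ≤
        Real.sqrt CS * Real.sqrt (∑ i, ⟪A (u' i), u' i⟫) *
          Real.sqrt (∑ j, ⟪A (v' j), v' j⟫))
    (u : V) (huK : u ∈ K) (hEuler : ∀ φ ∈ K, ⟪A u - f, φ⟫ = 0)
    (uk : V) (hukK : uk ∈ K)
    (v : ℕ → V) (e : Fin N → V)
    (hv0 : v 0 = uk)
    (heK : ∀ i : Fin N, e i ∈ Ki i)
    (heEq : ∀ i : Fin N, ∀ φ ∈ Ki i, ⟪A (e i), φ⟫ = ⟪f - A (v i), φ⟫)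
    (hvs : ∀ i : Fin N, v ((i : ℕ) + 1) = v i + e i) :
    E (v N) - E u ≤ (1 - 1 / (1 + CA * CS)) * (E uk - E u) := by
  -- nonnegativity of the A-quadratic form
  have hpos : ∀ x : V, 0 ≤ ⟪A x, x⟫ := fun x => le_trans (by positivity) (hAcoer x)
  -- symmetry with both arguments under A
  have hsym : ∀ x y : V, ⟪A x, y⟫ = ⟪A y, x⟫ := fun x y => by
    rw [hAsym x y, real_inner_comm]
  -- Euler equation restated
  have hEul : ∀ φ ∈ K, ⟪A u, φ⟫ = ⟪f, φ⟫ := by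
    intro φ hφ
    have h := hEuler φ hφ
    rw [inner_sub_left] at h
    linarith
  -- energy difference identity at the minimizer
  have hEnergyId : ∀ w ∈ K, E w - E u = 1 / 2 * ⟪A (w - u), w - u⟫ := by
    intro w hw
    have h1 := hEul (w - u) (K.sub_mem hw huK)
    have h2 := hsym u w
    rw [hE w, hE u]
    simp only [map_sub, inner_sub_left, inner_sub_right] at h1 ⊢
    linarith
  -- one-step energy decrease
  have hstep : ∀ i : Fin N, E (v ((i : ℕ) + 1)) = E (v i) - 1 / 2 * ⟪A (e i), e i⟫ := by
    intro i
    have h1 := heEq i (e i) (heK i)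
    rw [inner_sub_left] at h1
    have h2 := hsym (v i) (e i)
    rw [hvs i, hE, hE]
    simp only [map_add, inner_add_left, inner_add_right]
    linarith
  -- extended correction sequence over ℕ
  set ee : ℕ → V := fun n => if h : n < N then e ⟨n, h⟩ else 0 with hee
  have heeq : ∀ i : Fin N, ee (i : ℕ) = e i := by
    intro i
    simp [hee, i.isLt]
  -- iterates stay in K
  have hvK : ∀ n, n ≤ N → v n ∈ K := by
    intro n
    induction n with
    | zero => intro _; rw [hv0]; exact hukK
    | succ m ih =>
      intro hm
      have hmN : m < N := hm
      rw [hvs ⟨m, hmN⟩]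
      exact K.add_mem (ih (le_of_lt hmN)) (hKiK ⟨m, hmN⟩ (heK ⟨m, hmN⟩))
  -- the scalar sequence of energy decreases
  set c : ℕ → ℝ := fun n => if h : n < N then ⟪A (e ⟨n, h⟩), e ⟨n, h⟩⟫ else 0 with hc
  -- telescoping the energy
  have htel : ∀ n, n ≤ N → E (v n) = E uk - 1 / 2 * ∑ j ∈ Finset.range n, c j := by
    intro n
    induction n with
    | zero => intro _; simp [hv0]
    | succ m ih =>
      intro hm
      have hmN : m < N := hm
      have h1 := hstep ⟨m, hmN⟩
      rw [Finset.sum_range_succ]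
      have hcm : c m = ⟪A (e ⟨m, hmN⟩), e ⟨m, hmN⟩⟫ := by simp [hc, hmN]
      have h2 := ih (le_of_lt hmN)
      simp only [] at h1
      rw [h1, h2, hcm]
      ring
  -- total correction sum
  set S : ℝ := ∑ i : Fin N, ⟪A (e i), e i⟫ with hS
  have hScr : S = ∑ j ∈ Finset.range N, c j := by
    rw [hS, ← Fin.sum_univ_eq_sum_range c N]
    apply Finset.sum_congr rfl
    intro i _
    simp [hc, i.isLt]
  have hSnn : 0 ≤ S := Finset.sum_nonneg fun i _ => hpos (e i)
  have hEN : E (v N) = E uk - 1 / 2 * S := by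
    rw [htel N le_rfl, hScr]
  -- partial sums of corrections
  have hvsum : ∀ m n, m ≤ n → n ≤ N → v n = v m + ∑ j ∈ Finset.Ico m n, ee j := by
    intro m n hmn hnN
    induction n with
    | zero =>
      have : m = 0 := Nat.le_zero.mp hmn
      simp [this]
    | succ p ih =>
      have hpN : p < N := hnN
      rcases Nat.lt_or_ge m (p + 1) with hlt | hge
      · have hmp : m ≤ p := Nat.lt_succ_iff.mp hlt
        rw [Finset.sum_Ico_succ_top hmp, hvs ⟨p, hpN⟩, ih hmp (le_of_lt hpN), heeq ⟨p, hpN⟩]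
        abel
      · have : m = p + 1 := le_antisymm hmn hge
        simp [this]
  -- orthogonality after step i
  have horth : ∀ i : Fin N, ∀ φ ∈ Ki i, ⟪A (v ((i : ℕ) + 1) - u), φ⟫ = 0 := by
    intro i φ hφ
    have h1 := heEq i φ hφ
    rw [inner_sub_left] at h1
    have h2 := hEul φ (hKiK i hφ)
    rw [hvs i]
    simp only [map_sub, map_add, inner_sub_left, inner_add_left]
    linarith
  -- stable decomposition of the final error
  have hvNK : v N ∈ K := hvK N le_rfl
  obtain ⟨w, hw1, hw2, hw3⟩ := hSD (v N - u) (K.sub_mem hvNK huK)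
  set P : ℝ := ⟪A (v N - u), v N - u⟫ with hP
  have hPnn : 0 ≤ P := hpos _
  set W : ℝ := ∑ i, ⟪A (w i), w i⟫ with hW
  have hWnn : 0 ≤ W := Finset.sum_nonneg fun i _ => hpos (w i)
  -- key representation of the error pairing
  have hrep : ∀ i : Fin N, ⟪A (v N - u), w i⟫ = ∑ j ∈ Finset.Ioi i, ⟪A (w i), e j⟫ := by
    intro i
    have hsplit : v N = v ((i : ℕ) + 1) + ∑ j ∈ Finset.Ico ((i : ℕ) + 1) N, ee j :=
      hvsum ((i : ℕ) + 1) N i.isLt le_rfl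
    have hIco : ∑ j ∈ Finset.Ico ((i : ℕ) + 1) N, ⟪A (ee j), w i⟫
        = ∑ j ∈ Finset.Ioi i, ⟪A (w i), e j⟫ := by
      have hset : (Finset.Ioi i).map Fin.valEmbedding = Finset.Ico ((i : ℕ) + 1) N := by
        ext k
        simp only [Finset.mem_map, Finset.mem_Ioi, Finset.mem_Ico, Fin.valEmbedding_apply]
        constructor
        · rintro ⟨a, ha, rfl⟩
          have h1 := a.isLt
          have h2 : (i : ℕ) < (a : ℕ) := ha
          omega
        · rintro ⟨h1, h2⟩
          refine ⟨⟨k, h2⟩, ?_, rfl⟩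
          simp only [Fin.lt_iff_val_lt_val]
          omega
      rw [← hset, Finset.sum_map]
      apply Finset.sum_congr rfl
      intro j _
      rw [Fin.valEmbedding_apply, heeq j, hsym]
    calc ⟪A (v N - u), w i⟫
        = ⟪A (v ((i : ℕ) + 1) - u), w i⟫
          + ∑ j ∈ Finset.Ico ((i : ℕ) + 1) N, ⟪A (ee j), w i⟫ := by
          rw [show v N - u = (v ((i : ℕ) + 1) - u) + ∑ j ∈ Finset.Ico ((i : ℕ) + 1) N, ee j by
            rw [hsplit]; abel]
          rw [map_add, inner_add_left, map_sum, sum_inner]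
      _ = ∑ j ∈ Finset.Ico ((i : ℕ) + 1) N, ⟪A (ee j), w i⟫ := by
          rw [horth i (w i) (hw1 i)]; ring
      _ = ∑ j ∈ Finset.Ioi i, ⟪A (w i), e j⟫ := hIco
  -- the main estimate  P ≤ CA * CS * S
  have hPsum : P = ∑ i, ∑ j ∈ Finset.Ioi i, ⟪A (w i), e j⟫ := by
    calc P = ⟪A (v N - u), ∑ i, w i⟫ := by rw [hw2]
    _ = ∑ i, ⟪A (v N - u), w i⟫ := inner_sum _ _ _
    _ = ∑ i, ∑ j ∈ Finset.Ioi i, ⟪A (w i), e j⟫ := Finset.sum_congr rfl fun i _ => hrep i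
  have hCauchy : P ≤ Real.sqrt CS * Real.sqrt W * Real.sqrt S := by
    rw [hPsum]
    exact hSCS w e hw1 heK
  have hWP : W ≤ CA * P := hw3
  have hmain : P ≤ CA * CS * S := by
    have h1 : Real.sqrt CS * Real.sqrt W * Real.sqrt S = Real.sqrt (CS * W * S) := by
      rw [← Real.sqrt_mul (le_of_lt hCS) W, ← Real.sqrt_mul (mul_nonneg (le_of_lt hCS) hWnn) S]
    have h2 : P ^ 2 ≤ CS * W * S := by
      have h3 : P ≤ Real.sqrt (CS * W * S) := by rw [← h1]; exact hCauchy
      have h4 : 0 ≤ CS * W * S := by positivity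
      nlinarith [Real.sq_sqrt h4, Real.sqrt_nonneg (CS * W * S)]
    nlinarith [mul_nonneg (mul_nonneg (le_of_lt hCA) (le_of_lt hCS)) hSnn,
      mul_le_mul_of_nonneg_left hWP (mul_nonneg (le_of_lt hCS) hSnn)]
  -- assemble everything
  have ha : E (v N) - E u = 1 / 2 * P := hEnergyId (v N) hvNK
  have hbma : (E uk - E u) - (E (v N) - E u) = 1 / 2 * S := by
    rw [hEN]; ring
  set a : ℝ := E (v N) - E u
  set b : ℝ := E uk - E u
  have hab : a ≤ CA * CS * (b - a) := by
    calc a = 1 / 2 * P := ha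
    _ ≤ CA * CS * (1 / 2 * S) := by nlinarith [hmain]
    _ = CA * CS * (b - a) := by rw [hbma]
  have h1c : (0 : ℝ) < 1 + CA * CS := by positivity
  have hgoal : (1 - 1 / (1 + CA * CS)) * b = (CA * CS) / (1 + CA * CS) * b := by
    field_simp
    ring
  rw [hgoal, div_mul_eq_mul_div, le_div_iff₀ h1c]
  nlinarith [hab]
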